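/- Let B be a real symmetric positive definite n×n matrix with largest eigenvalue λ_max(B), and let Λ = diag(μ₁,...,μₙ) with 0 < μᵢ < 2/λ_max(B) for all i. Then every eigenvalue λ of ΛB satisfies 0 < λ < 2, and consequently the spectral radius of I − ΛB is strictly less than 1. -/

import Mathlib

open Matrix

lemma ofRealFun : (fun x : ℝ => (Complex.ofReal x)) = ⇑Complex.ofRealHom := rfl

lemma mapMulVec {n : ℕ} (M : Matrix (Fin n) (Fin n) ℝ) (x : Fin n → ℝ) :
    (fun i => ((M *ᵥ x) i : ℂ)) = (M.map (Complex.ofReal ·)) *ᵥ (fun i => ((x i : ℂ))) := by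
  funext i
  exact RingHom.map_mulVec Complex.ofRealHom M x i

lemma mapQuad {n : ℕ} (M : Matrix (Fin n) (Fin n) ℝ) (x : Fin n → ℝ) :
    ((x ⬝ᵥ M *ᵥ x : ℝ) : ℂ)
      = (fun i => ((x i : ℂ))) ⬝ᵥ (M.map (Complex.ofReal ·)) *ᵥ (fun i => ((x i : ℂ))) := by
  rw [← mapMulVec]
  exact RingHom.map_dotProduct Complex.ofRealHom x (M *ᵥ x)

lemma quad_split {n : ℕ} (M : Matrix (Fin n) (Fin n) ℝ) (hM : Mᵀ = M) (v : Fin n → ℂ) :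
    star v ⬝ᵥ (M.map (Complex.ofReal ·)) *ᵥ v
      = (((fun i => (v i).re) ⬝ᵥ M *ᵥ (fun i => (v i).re)
         + (fun i => (v i).im) ⬝ᵥ M *ᵥ (fun i => (v i).im) : ℝ) : ℂ) := by
  set Mc := M.map (Complex.ofReal ·) with hMc
  set xc : Fin n → ℂ := fun i => ((v i).re : ℂ) with hxc
  set yc : Fin n → ℂ := fun i => ((v i).im : ℂ) with hyc
  have hv : v = xc + Complex.I • yc := by
    funext i
    simp [hxc, hyc, Complex.ext_iff, mul_comm]
  have hsv : star v = xc - Complex.I • yc := by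
    funext i
    simp [hxc, hyc, Complex.ext_iff, mul_comm, Complex.conj_re, Complex.conj_im]
  have hMcT : Mcᵀ = Mc := by
    rw [hMc, ← Matrix.transpose_map, hM]
  have hcross : xc ⬝ᵥ Mc *ᵥ yc = yc ⬝ᵥ Mc *ᵥ xc := by
    rw [dotProduct_mulVec, ← mulVec_transpose, hMcT, dotProduct_comm]
  rw [hsv]
  conv_lhs => rw [hv]
  rw [mulVec_add, mulVec_smul, sub_dotProduct, dotProduct_add, dotProduct_add,
    smul_dotProduct, dotProduct_smul, dotProduct_smul, hcross]
  rw [Complex.ofReal_add, mapQuad, mapQuad, ← hxc, ← hyc]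
  rw [← hMc]
  simp only [smul_dotProduct, smul_smul, Complex.I_mul_I, smul_eq_mul]
  ring_nf
  rw [Complex.I_sq]
  ring

lemma quad_sq_le {n : ℕ} (B : Matrix (Fin n) (Fin n) ℝ) (hB : B.PosDef) (x : Fin n → ℝ) :
    (B *ᵥ x) ⬝ᵥ (B *ᵥ x) ≤ (⨆ j, hB.isHermitian.eigenvalues j) * (x ⬝ᵥ B *ᵥ x) := by
  classical
  set hH := hB.isHermitian with hHdef
  set U : Matrix (Fin n) (Fin n) ℝ := (hH.eigenvectorUnitary : Matrix (Fin n) (Fin n) ℝ) with hU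
  set d := hH.eigenvalues with hd
  have hUU : star U * U = 1 := Matrix.mem_unitaryGroup_iff'.mp (hH.eigenvectorUnitary).2
  have hspec : B = U * diagonal d * star U := by
    have := hH.spectral_theorem
    simpa using this
  set c := star U *ᵥ x with hc
  have hBx : B *ᵥ x = U *ᵥ (diagonal d *ᵥ c) := by
    rw [hspec, mulVec_mulVec, mulVec_mulVec]
  have hstarU : star U = Uᵀ := rfl
  have key1 : x ⬝ᵥ B *ᵥ x = ∑ i, d i * (c i)^2 := by
    rw [hBx, dotProduct_mulVec, ← mulVec_transpose, ← hstarU, ← hc]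
    simp [mulVec_diagonal, dotProduct, sq]
    exact Finset.sum_congr rfl fun i _ => by ring
  have key2 : (B *ᵥ x) ⬝ᵥ (B *ᵥ x) = ∑ i, (d i)^2 * (c i)^2 := by
    rw [hBx, dotProduct_mulVec, ← mulVec_transpose, ← hstarU, mulVec_mulVec, hUU, one_mulVec]
    simp [mulVec_diagonal, dotProduct, sq]
    exact Finset.sum_congr rfl fun i _ => by ring
  have hdle : ∀ i, d i ≤ ⨆ j, d j := fun i =>
    le_ciSup (Set.Finite.bddAbove (Set.finite_range d)) i
  have hdpos : ∀ i, 0 < d i := fun i => hB.eigenvalues_pos i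
  rw [key1, key2, Finset.mul_sum]
  refine Finset.sum_le_sum fun i _ => ?_
  rw [sq, ← mul_assoc]
  exact mul_le_mul_of_nonneg_right
    (mul_le_mul_of_nonneg_right (hdle i) (hdpos i).le) (sq_nonneg _)

theorem stmt6 {n : ℕ} (hn : 0 < n) (B : Matrix (Fin n) (Fin n) ℝ) (hB : B.PosDef)
    (μ : Fin n → ℝ)
    (hμ : ∀ i, 0 < μ i ∧ μ i < 2 / (⨆ j, hB.isHermitian.eigenvalues j)) :
    (∀ (lam : ℂ) (v : Fin n → ℂ), v ≠ 0 →
      ((Matrix.diagonal μ * B).map (Complex.ofReal ·)).mulVec v = lam • v →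
      lam.im = 0 ∧ 0 < lam.re ∧ lam.re < 2) ∧
    (∀ (η : ℂ) (v : Fin n → ℂ), v ≠ 0 →
      ((1 - Matrix.diagonal μ * B).map (Complex.ofReal ·)).mulVec v = η • v →
      ‖η‖ < 1) := by
  classical
  set lmax : ℝ := ⨆ j, hB.isHermitian.eigenvalues j with hlmax
  have hBT : Bᵀ = B := by
    ext i j
    have := congrFun (congrFun hB.isHermitian i) j
    simpa using this
  have hBpos : ∀ z : Fin n → ℝ, z ≠ 0 → 0 < z ⬝ᵥ B *ᵥ z := fun z hz => by
    simpa using hB.dotProduct_mulVec_pos hz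
  have hBnn : ∀ z : Fin n → ℝ, 0 ≤ z ⬝ᵥ B *ᵥ z := fun z => by
    by_cases h : z = 0
    · simp [h]
    · exact (hBpos z h).le
  have hlpos : 0 < lmax := by
    have i0 : Fin n := ⟨0, hn⟩
    exact lt_of_lt_of_le (hB.eigenvalues_pos i0)
      (le_ciSup (Set.Finite.bddAbove (Set.finite_range _)) i0)
  have hdiag : ∀ z : Fin n → ℝ, z ⬝ᵥ diagonal μ *ᵥ z = ∑ i, μ i * (z i)^2 := fun z => by
    simp only [dotProduct, mulVec_diagonal, sq]
    exact Finset.sum_congr rfl fun i _ => by ring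
  have key : ∀ (lam : ℂ) (v : Fin n → ℂ), v ≠ 0 →
      ((Matrix.diagonal μ * B).map (Complex.ofReal ·)).mulVec v = lam • v →
      lam.im = 0 ∧ 0 < lam.re ∧ lam.re < 2 := by
    intro lam v hv h
    set Bc := B.map (Complex.ofReal ·) with hBc
    set Dc := (diagonal μ).map (Complex.ofReal ·) with hDc
    have hmap : (diagonal μ * B).map (Complex.ofReal ·) = Dc * Bc := by
      rw [hBc, hDc, ofRealFun]
      exact Matrix.map_mul
    set x : Fin n → ℝ := fun i => (v i).re with hx
    set y : Fin n → ℝ := fun i => (v i).im with hy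
    set qb : ℝ := x ⬝ᵥ B *ᵥ x + y ⬝ᵥ B *ᵥ y with hqb
    set w : Fin n → ℂ := Bc *ᵥ v with hw
    have hq : star v ⬝ᵥ w = (qb : ℂ) := quad_split B hBT v
    have hxy : x ≠ 0 ∨ y ≠ 0 := by
      by_contra hc
      push_neg at hc
      exact hv (funext fun i => Complex.ext (congrFun hc.1 i) (congrFun hc.2 i))
    have hqpos : 0 < qb := by
      rcases hxy with h' | h'
      · exact add_pos_of_pos_of_nonneg (hBpos x h') (hBnn y)
      · exact add_pos_of_nonneg_of_pos (hBnn x) (hBpos y h')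
    have hqb0 : (qb : ℂ) ≠ 0 := by
      exact_mod_cast Complex.ofReal_ne_zero.mpr hqpos.ne'
    have hw0 : w ≠ 0 := by
      intro h0
      rw [h0, dotProduct_zero] at hq
      exact hqb0 hq.symm
    have h2 : Dc *ᵥ w = lam • v := by
      rw [hw, mulVec_mulVec, ← hmap]
      exact h
    set p : Fin n → ℝ := fun i => (w i).re with hp
    set q : Fin n → ℝ := fun i => (w i).im with hq2
    set S : ℝ := p ⬝ᵥ diagonal μ *ᵥ p + q ⬝ᵥ diagonal μ *ᵥ q with hS
    have hqsD : star w ⬝ᵥ Dc *ᵥ w = (S : ℂ) :=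
      quad_split (diagonal μ) (diagonal_transpose μ) w
    have hswv : star w ⬝ᵥ v = (qb : ℂ) := by
      have h1 := star_dotProduct (v := v) (w := w)
      have h3 : star (star w ⬝ᵥ v) = (qb : ℂ) := by rw [← h1]; exact hq
      calc star w ⬝ᵥ v = star (star (star w ⬝ᵥ v)) := (star_star _).symm
        _ = star ((qb : ℂ)) := by rw [h3]
        _ = (qb : ℂ) := by simp
    have hE : (S : ℂ) = lam * (qb : ℂ) := by
      rw [← hqsD, h2, dotProduct_smul, hswv, smul_eq_mul]
    have hlam : lam = ((S / qb : ℝ) : ℂ) := by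
      rw [Complex.ofReal_div]
      rw [eq_div_iff hqb0]
      exact hE.symm
    -- positivity of S
    obtain ⟨i0, hi0⟩ := Function.ne_iff.mp hw0
    have hi0' : w i0 ≠ 0 := by simpa using hi0
    have hpq0 : 0 < (p i0)^2 + (q i0)^2 := by
      by_contra hc
      push_neg at hc
      have h1 : p i0 = 0 := by nlinarith [sq_nonneg (p i0), sq_nonneg (q i0)]
      have h1' : q i0 = 0 := by nlinarith [sq_nonneg (p i0), sq_nonneg (q i0)]
      exact hi0' (Complex.ext (by simpa using h1) (by simpa using h1'))
    have hSsum : S = ∑ i, μ i * ((p i)^2 + (q i)^2) := by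
      rw [hS, hdiag p, hdiag q, ← Finset.sum_add_distrib]
      exact Finset.sum_congr rfl fun i _ => by ring
    have hSpos : 0 < S := by
      rw [hSsum]
      refine Finset.sum_pos' (fun i _ => ?_) ⟨i0, Finset.mem_univ _, ?_⟩
      · have := (hμ i).1
        nlinarith [sq_nonneg (p i), sq_nonneg (q i)]
      · exact mul_pos (hμ i0).1 hpq0
    -- upper bound
    have hSlt : S < (2 / lmax) * ∑ i, ((p i)^2 + (q i)^2) := by
      rw [hSsum, Finset.mul_sum]
      refine Finset.sum_lt_sum (fun i _ => ?_) ⟨i0, Finset.mem_univ _, ?_⟩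
      · have h1 := (hμ i).2
        nlinarith [sq_nonneg (p i), sq_nonneg (q i)]
      · exact (mul_lt_mul_of_pos_right (hμ i0).2 hpq0)
    have hpB : p = B *ᵥ x := by
      funext i
      simp only [hp, hw, hBc, mulVec, dotProduct, Complex.re_sum]
      refine Finset.sum_congr rfl fun j _ => ?_
      simp [Matrix.map_apply, Complex.mul_re, hx]
    have hqB : q = B *ᵥ y := by
      funext i
      simp only [hq2, hw, hBc, mulVec, dotProduct, Complex.im_sum]
      refine Finset.sum_congr rfl fun j _ => ?_
      simp [Matrix.map_apply, Complex.mul_im, hy]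
    have hNle : ∑ i, ((p i)^2 + (q i)^2) ≤ lmax * qb := by
      have h1 : ∑ i, ((p i)^2 + (q i)^2) = p ⬝ᵥ p + q ⬝ᵥ q := by
        rw [Finset.sum_add_distrib]
        simp [dotProduct, sq]
      rw [h1, hpB, hqB, hqb, mul_add]
      exact add_le_add (quad_sq_le B hB x) (quad_sq_le B hB y)
    have hS2 : S < 2 * qb := by
      calc S < (2 / lmax) * ∑ i, ((p i)^2 + (q i)^2) := hSlt
        _ ≤ (2 / lmax) * (lmax * qb) := by
            exact mul_le_mul_of_nonneg_left hNle (by positivity)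
        _ = 2 * qb := by field_simp
    refine ⟨by rw [hlam]; exact Complex.ofReal_im _, ?_, ?_⟩
    · rw [hlam, Complex.ofReal_re]
      exact div_pos hSpos hqpos
    · rw [hlam, Complex.ofReal_re]
      rw [div_lt_iff₀ hqpos]
      linarith
  refine ⟨key, fun η v hv h => ?_⟩
  have hmap1 : (1 - Matrix.diagonal μ * B).map (Complex.ofReal ·)
      = 1 - (Matrix.diagonal μ * B).map (Complex.ofReal ·) := by
    rw [Matrix.map_sub _ (fun a b => by push_cast; ring), Matrix.map_one _ (by simp) (by simp)]
  rw [hmap1, sub_mulVec, one_mulVec] at h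
  have h2 : ((Matrix.diagonal μ * B).map (Complex.ofReal ·)).mulVec v = (1 - η) • v := by
    rw [sub_smul, one_smul]
    have h3 : v = η • v + ((Matrix.diagonal μ * B).map (Complex.ofReal ·)).mulVec v :=
      sub_eq_iff_eq_add.mp h
    rw [eq_sub_iff_add_eq, add_comm]
    exact h3.symm
  obtain ⟨him, hpos, hlt⟩ := key (1 - η) v hv h2
  have him' : η.im = 0 := by
    simpa using him
  have hre1 : (1 - η).re = 1 - η.re := by simp
  rw [hre1] at hpos hlt
  have : η = ((η.re : ℝ) : ℂ) := Complex.ext rfl (by simp [him'])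
  rw [this, Complex.norm_real, Real.norm_eq_abs]
  rw [abs_lt]
  constructor <;> linarith
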